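/- arXiv:1806.10700 — 3 statements merged into one kernel-verified Lean document; each statement's English description precedes it below -/
import Mathlib

section
/- The set QSym_𝔦 of quasisymmetric functions on a totally ordered index set 𝔦 is a subring (indeed a ℤ-subalgebra) of the formal power series ring ℤ⟦α_i : i ∈ 𝔦⟧; that is, it contains 0 and 1 and is closed under addition, negation, and multiplication. -/
/-!
STATEMENT 0: The set `QSym_𝔦` of quasisymmetric functions on a totally ordered index set `𝔦`
is a subring (indeed a ℤ-subalgebra) of the formal power series ring `ℤ⟦α_i : i ∈ 𝔦⟧`:
it contains `0` and `1` and is closed under addition, negation, (integer scalar multiplication)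
and multiplication.
-/

open MvPowerSeries

noncomputable section

/-- The exponent vector of the monomial `α_{i 0}^{l 0} ⋯ α_{i (ℓ-1)}^{l (ℓ-1)}`. -/
def qsMonom {ι : Type*} (l : List ℕ+) (i : Fin l.length → ι) : ι →₀ ℕ :=
  ∑ k : Fin l.length, Finsupp.single (i k) (l.get k : ℕ)

/-- A power series `f ∈ R⟦α_i : i ∈ ι⟧` is quasisymmetric if it has bounded degree and,
for every list `l` of positive integers and every two strictly increasing tuples of indices
`i_1 < ⋯ < i_ℓ` and `j_1 < ⋯ < j_ℓ`, the coefficients of `f` at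
`α_{i_1}^{l_1} ⋯ α_{i_ℓ}^{l_ℓ}` and `α_{j_1}^{l_1} ⋯ α_{j_ℓ}^{l_ℓ}` agree. -/
def IsQSym {ι : Type*} [LinearOrder ι] {R : Type*} [CommRing R] (f : MvPowerSeries ι R) : Prop :=
  (∃ N : ℕ, ∀ d : ι →₀ ℕ, N < d.sum (fun _ n => n) → MvPowerSeries.coeff (R := R) d f = 0) ∧
  ∀ (l : List ℕ+) (i j : Fin l.length → ι), StrictMono i → StrictMono j →
    MvPowerSeries.coeff (R := R) (qsMonom l i) f = MvPowerSeries.coeff (R := R) (qsMonom l j) f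

namespace QSymAux

variable {ι : Type*} [LinearOrder ι]

lemma sum_single_apply_of_inj {n : ℕ} {i : Fin n → ι} (hi : Function.Injective i)
    (c : Fin n → ℕ) (k : Fin n) :
    (∑ k' : Fin n, Finsupp.single (i k') (c k') : ι →₀ ℕ) (i k) = c k := by
  classical
  rw [Finsupp.finset_sum_apply]
  rw [Finset.sum_eq_single k]
  · simp [Finsupp.single_apply]
  · intro b _ hb
    rw [Finsupp.single_apply, if_neg (fun h => hb (hi h))]
  · simp

lemma sum_single_apply_of_notMem {n : ℕ} (i : Fin n → ι) (c : Fin n → ℕ) {x : ι}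
    (hx : x ∉ Set.range i) :
    (∑ k' : Fin n, Finsupp.single (i k') (c k') : ι →₀ ℕ) x = 0 := by
  classical
  rw [Finsupp.finset_sum_apply]
  refine Finset.sum_eq_zero fun b _ => ?_
  rw [Finsupp.single_apply, if_neg (fun h => hx ⟨b, h⟩)]

lemma eq_sum_single {n : ℕ} {i : Fin n → ι} (hi : Function.Injective i) (d : ι →₀ ℕ)
    (hd : ∀ x ∈ d.support, x ∈ Set.range i) :
    d = ∑ k : Fin n, Finsupp.single (i k) (d (i k)) := by
  ext x
  by_cases hx : x ∈ Set.range i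
  · obtain ⟨k, rfl⟩ := hx
    rw [sum_single_apply_of_inj hi]
  · rw [sum_single_apply_of_notMem i _ hx]
    by_contra h
    exact hx (hd x (Finsupp.mem_support_iff.mpr h))

lemma support_subset {n : ℕ} (i : Fin n → ι) (c : Fin n → ℕ) {x : ι}
    (hx : (∑ k' : Fin n, Finsupp.single (i k') (c k') : ι →₀ ℕ) x ≠ 0) : x ∈ Set.range i := by
  by_contra h
  exact hx (sum_single_apply_of_notMem i c h)

lemma qsMonom_ofFn {m : ℕ} (c : Fin m → ℕ+) (u : Fin m → ι) :
    qsMonom (List.ofFn c) (fun k => u (Fin.cast (List.length_ofFn (f := c)) k)) =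
    ∑ k : Fin m, Finsupp.single (u k) ((c k : ℕ)) := by
  unfold qsMonom
  refine Fintype.sum_equiv (finCongr (List.length_ofFn (f := c))) _ _ (fun k => ?_)
  simp [List.get_ofFn]
  rfl

/-- Key lemma: coefficients of a quasisymmetric `f` at `∑ single (i k) (e k)` depend only
on `e`, for strictly monotone `i` (entries of `e` may be zero). -/
lemma key {R : Type*} [CommRing R] {f : MvPowerSeries ι R}
    (hf : ∀ (l : List ℕ+) (i j : Fin l.length → ι), StrictMono i → StrictMono j →
      MvPowerSeries.coeff (R := R) (qsMonom l i) f = MvPowerSeries.coeff (R := R) (qsMonom l j) f)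
    {n : ℕ} {i j : Fin n → ι} (hi : StrictMono i) (hj : StrictMono j) (e : Fin n → ℕ) :
    MvPowerSeries.coeff (R := R) (∑ k : Fin n, Finsupp.single (i k) (e k)) f =
    MvPowerSeries.coeff (R := R) (∑ k : Fin n, Finsupp.single (j k) (e k)) f := by
  classical
  set s : Finset (Fin n) := Finset.univ.filter (fun k => e k ≠ 0) with hs
  set emb : Fin s.card ≃o {x // x ∈ s} := s.orderIsoOfFin rfl with hemb
  have hpos : ∀ k : Fin s.card, 0 < e (emb k) :=
    fun k => Nat.pos_of_ne_zero (Finset.mem_filter.mp (emb k).2).2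
  set c : Fin s.card → ℕ+ := fun k => ⟨e (emb k), hpos k⟩ with hc
  have hmono : ∀ {u : Fin n → ι}, StrictMono u →
      StrictMono (fun k : Fin (List.ofFn c).length =>
        (fun k' : Fin s.card => u (emb k')) (Fin.cast (List.length_ofFn (f := c)) k)) := by
    intro u hu a b hab
    have hab' : Fin.cast (List.length_ofFn (f := c)) a < Fin.cast (List.length_ofFn (f := c)) b := hab
    exact hu (Subtype.coe_lt_coe.mpr (emb.strictMono hab'))
  have hsum : ∀ u : Fin n → ι,
      (∑ k : Fin s.card, Finsupp.single (u (emb k)) ((c k : ℕ)) : ι →₀ ℕ) =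
      ∑ k : Fin n, Finsupp.single (u k) (e k) := by
    intro u
    calc (∑ k : Fin s.card, Finsupp.single (u (emb k)) ((c k : ℕ)) : ι →₀ ℕ)
        = ∑ x ∈ s, Finsupp.single (u x) (e x) := by
          rw [← Finset.sum_coe_sort s (fun x => Finsupp.single (u x) (e x))]
          exact Fintype.sum_equiv emb.toEquiv _ _ (fun k => rfl)
      _ = ∑ k : Fin n, Finsupp.single (u k) (e k) := by
          refine Finset.sum_subset (Finset.subset_univ s) fun x _ hx => ?_
          have : e x = 0 := by
            by_contra h
            exact hx (by rw [hs]; exact Finset.mem_filter.mpr ⟨Finset.mem_univ x, h⟩)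
          rw [this, Finsupp.single_zero]
  have hkey := hf (List.ofFn c)
    (fun k => (fun k' : Fin s.card => i (emb k')) (Fin.cast (List.length_ofFn (f := c)) k))
    (fun k => (fun k' : Fin s.card => j (emb k')) (Fin.cast (List.length_ofFn (f := c)) k))
    (hmono hi) (hmono hj)
  rwa [qsMonom_ofFn c (fun k' => i (emb k')), qsMonom_ofFn c (fun k' => j (emb k')),
    hsum i, hsum j] at hkey

end QSymAux

open QSymAux in
/-- `QSym_𝔦` is a subring (indeed a ℤ-subalgebra) of `ℤ⟦α_i : i ∈ 𝔦⟧`. -/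
theorem isQSym_zero_one_add_neg_zsmul_mul (ι : Type*) [LinearOrder ι] :
    IsQSym (0 : MvPowerSeries ι ℤ) ∧
    IsQSym (1 : MvPowerSeries ι ℤ) ∧
    (∀ f g : MvPowerSeries ι ℤ, IsQSym f → IsQSym g → IsQSym (f + g)) ∧
    (∀ f : MvPowerSeries ι ℤ, IsQSym f → IsQSym (-f)) ∧
    (∀ (c : ℤ) (f : MvPowerSeries ι ℤ), IsQSym f → IsQSym (c • f)) ∧
    (∀ f g : MvPowerSeries ι ℤ, IsQSym f → IsQSym g → IsQSym (f * g)) := by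
  classical
  refine ⟨⟨⟨0, fun d _ => by simp⟩, fun l i j _ _ => by simp⟩, ?_, ?_, ?_, ?_, ?_⟩
  · -- 1
    refine ⟨⟨0, fun d hd => ?_⟩, fun l i j hi hj => ?_⟩
    · rw [coeff_one, if_neg]
      intro h
      rw [h] at hd
      simp at hd
    · have hne : ∀ (u : Fin l.length → ι), Function.Injective u →
          (qsMonom l u = 0 ↔ l.length = 0) := by
        intro u hu
        constructor
        · intro h
          by_contra hn
          have hk : 0 < l.length := Nat.pos_of_ne_zero hn
          have h2 : qsMonom l u (u ⟨0, hk⟩) = (l.get ⟨0, hk⟩ : ℕ) :=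
            sum_single_apply_of_inj hu (fun k => (l.get k : ℕ)) ⟨0, hk⟩
          rw [h] at h2
          rw [Finsupp.zero_apply] at h2
          have h3 := (l.get ⟨0, hk⟩).2
          exact h3.ne' h2.symm
        · intro h
          unfold qsMonom
          apply Finset.sum_eq_zero
          intro k _
          have := k.2
          omega
      rw [coeff_one, coeff_one]
      by_cases h : l.length = 0
      · rw [if_pos ((hne i hi.injective).mpr h), if_pos ((hne j hj.injective).mpr h)]
      · rw [if_neg (fun hh => h ((hne i hi.injective).mp hh)),
          if_neg (fun hh => h ((hne j hj.injective).mp hh))]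
  · -- add
    rintro f g ⟨⟨Nf, hNf⟩, hf⟩ ⟨⟨Ng, hNg⟩, hg⟩
    refine ⟨⟨max Nf Ng, fun d hd => ?_⟩, fun l i j hi hj => ?_⟩
    · rw [map_add, hNf d (lt_of_le_of_lt (le_max_left _ _) hd),
        hNg d (lt_of_le_of_lt (le_max_right _ _) hd), add_zero]
    · rw [map_add, map_add, hf l i j hi hj, hg l i j hi hj]
  · -- neg
    rintro f ⟨⟨Nf, hNf⟩, hf⟩
    exact ⟨⟨Nf, fun d hd => by rw [map_neg, hNf d hd, neg_zero]⟩,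
      fun l i j hi hj => by rw [map_neg, map_neg, hf l i j hi hj]⟩
  · -- zsmul
    rintro c f ⟨⟨Nf, hNf⟩, hf⟩
    exact ⟨⟨Nf, fun d hd => by rw [map_smul, hNf d hd, smul_zero]⟩,
      fun l i j hi hj => by rw [map_smul, map_smul, hf l i j hi hj]⟩
  · -- mul
    rintro f g ⟨⟨Nf, hNf⟩, hf⟩ ⟨⟨Ng, hNg⟩, hg⟩
    constructor
    · refine ⟨Nf + Ng, fun d hd => ?_⟩
      rw [coeff_mul]
      refine Finset.sum_eq_zero fun p hp => ?_
      have hpd : p.1 + p.2 = d := Finset.HasAntidiagonal.mem_antidiagonal.mp hp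
      have hsum : p.1.sum (fun _ n => n) + p.2.sum (fun _ n => n) = d.sum (fun _ n => n) := by
        rw [← hpd]
        exact (Finsupp.sum_add_index' (fun _ => rfl) (fun _ _ _ => rfl)).symm
      by_cases h1 : Nf < p.1.sum (fun _ n => n)
      · rw [hNf p.1 h1, zero_mul]
      · rw [hNg p.2 (by omega), mul_zero]
    · intro l i j hi hj
      have hqi : ∀ k : Fin l.length, qsMonom l i (i k) = (l.get k : ℕ) :=
        fun k => sum_single_apply_of_inj hi.injective (fun k' => (l.get k' : ℕ)) k
      have hqj : ∀ k : Fin l.length, qsMonom l j (j k) = (l.get k : ℕ) :=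
        fun k => sum_single_apply_of_inj hj.injective (fun k' => (l.get k' : ℕ)) k
      have hsupp : ∀ (u : Fin l.length → ι) (d0 : ι →₀ ℕ),
          (∃ d1 : ι →₀ ℕ, d0 + d1 = qsMonom l u) → ∀ x ∈ d0.support, x ∈ Set.range u := by
        rintro u d0 ⟨d1, hd1⟩ x hx
        rw [Finsupp.mem_support_iff] at hx
        refine support_subset u (fun k' => (l.get k' : ℕ)) (x := x) ?_
        have : qsMonom l u x ≠ 0 := by
          rw [← hd1, Finsupp.add_apply]
          omega
        exact this
      rw [coeff_mul, coeff_mul]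
      refine Finset.sum_nbij'
        (fun p => (∑ k : Fin l.length, Finsupp.single (j k) (p.1 (i k)),
                   ∑ k : Fin l.length, Finsupp.single (j k) (p.2 (i k))))
        (fun p => (∑ k : Fin l.length, Finsupp.single (i k) (p.1 (j k)),
                   ∑ k : Fin l.length, Finsupp.single (i k) (p.2 (j k))))
        ?_ ?_ ?_ ?_ ?_
      · intro p hp
        have hpd : p.1 + p.2 = qsMonom l i := Finset.HasAntidiagonal.mem_antidiagonal.mp hp
        rw [Finset.HasAntidiagonal.mem_antidiagonal]
        show (∑ k : Fin l.length, Finsupp.single (j k) (p.1 (i k))) +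
             (∑ k : Fin l.length, Finsupp.single (j k) (p.2 (i k))) = qsMonom l j
        rw [← Finset.sum_add_distrib]
        unfold qsMonom
        refine Finset.sum_congr rfl fun k _ => ?_
        rw [← Finsupp.single_add]
        congr 1
        rw [← hqi k, ← hpd, Finsupp.add_apply]
      · intro p hp
        have hpd : p.1 + p.2 = qsMonom l j := Finset.HasAntidiagonal.mem_antidiagonal.mp hp
        rw [Finset.HasAntidiagonal.mem_antidiagonal]
        show (∑ k : Fin l.length, Finsupp.single (i k) (p.1 (j k))) +
             (∑ k : Fin l.length, Finsupp.single (i k) (p.2 (j k))) = qsMonom l i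
        rw [← Finset.sum_add_distrib]
        unfold qsMonom
        refine Finset.sum_congr rfl fun k _ => ?_
        rw [← Finsupp.single_add]
        congr 1
        rw [← hqj k, ← hpd, Finsupp.add_apply]
      · -- left inverse
        intro p hp
        have hpd : p.1 + p.2 = qsMonom l i := Finset.HasAntidiagonal.mem_antidiagonal.mp hp
        have hST : ∀ (e : ι →₀ ℕ), (∀ x ∈ e.support, x ∈ Set.range i) →
            (∑ k : Fin l.length, Finsupp.single (i k)
              ((∑ k' : Fin l.length, Finsupp.single (j k') (e (i k')) : ι →₀ ℕ) (j k))) = e := by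
          intro e he
          calc (∑ k : Fin l.length, Finsupp.single (i k)
                ((∑ k' : Fin l.length, Finsupp.single (j k') (e (i k')) : ι →₀ ℕ) (j k)))
              = ∑ k : Fin l.length, Finsupp.single (i k) (e (i k)) :=
                Finset.sum_congr rfl fun k _ => by
                  rw [sum_single_apply_of_inj hj.injective (fun k' => e (i k')) k]
            _ = e := (eq_sum_single hi.injective e he).symm
        have h1 := hST p.1 (hsupp i p.1 ⟨p.2, hpd⟩)
        have h2 := hST p.2 (hsupp i p.2 ⟨p.1, by rw [add_comm]; exact hpd⟩)
        show (_, _) = p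
        rw [h1, h2]
      · -- right inverse
        intro p hp
        have hpd : p.1 + p.2 = qsMonom l j := Finset.HasAntidiagonal.mem_antidiagonal.mp hp
        have hTS : ∀ (e : ι →₀ ℕ), (∀ x ∈ e.support, x ∈ Set.range j) →
            (∑ k : Fin l.length, Finsupp.single (j k)
              ((∑ k' : Fin l.length, Finsupp.single (i k') (e (j k')) : ι →₀ ℕ) (i k))) = e := by
          intro e he
          calc (∑ k : Fin l.length, Finsupp.single (j k)
                ((∑ k' : Fin l.length, Finsupp.single (i k') (e (j k')) : ι →₀ ℕ) (i k)))
              = ∑ k : Fin l.length, Finsupp.single (j k) (e (j k)) :=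
                Finset.sum_congr rfl fun k _ => by
                  rw [sum_single_apply_of_inj hi.injective (fun k' => e (j k')) k]
            _ = e := (eq_sum_single hj.injective e he).symm
        have h1 := hTS p.1 (hsupp j p.1 ⟨p.2, hpd⟩)
        have h2 := hTS p.2 (hsupp j p.2 ⟨p.1, by rw [add_comm]; exact hpd⟩)
        show (_, _) = p
        rw [h1, h2]
      · -- term equality
        intro p hp
        have hpd : p.1 + p.2 = qsMonom l i := Finset.HasAntidiagonal.mem_antidiagonal.mp hp
        have hc : ∀ (e : ι →₀ ℕ) (F : MvPowerSeries ι ℤ),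
            (∀ (l' : List ℕ+) (i' j' : Fin l'.length → ι), StrictMono i' → StrictMono j' →
              coeff (R := ℤ) (qsMonom l' i') F = coeff (R := ℤ) (qsMonom l' j') F) →
            (∀ x ∈ e.support, x ∈ Set.range i) →
            coeff (R := ℤ) e F = coeff (R := ℤ) (∑ k : Fin l.length, Finsupp.single (j k) (e (i k))) F := by
          intro e F hF he
          conv_lhs => rw [eq_sum_single hi.injective e he]
          exact key hF hi hj (fun k => e (i k))
        rw [hc p.1 f hf (hsupp i p.1 ⟨p.2, hpd⟩),
          hc p.2 g hg (hsupp i p.2 ⟨p.1, by rw [add_comm]; exact hpd⟩)]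


end
end

section
/- For every m ≥ 0, QSym_m (quasisymmetric polynomials in the variables α_1, …, α_m), together with the projections π_{m,n}: QSym_m → ℤ[α_1, …, α_n] for n ≤ m (setting α_i ↦ 0 for i > n), is the inverse limit of the polynomial rings ℤ[α_1, …, α_n] for n ≤ m in the category of graded rings: for every ℕ-graded commutative ring R^• and every family of graded ring homomorphisms f_n: R^• → ℤ[α_1, …, α_n], 0 ≤ n ≤ m, satisfying g_i^n ∘ f_{n+1} = f_n for all 0 ≤ n < m and 1 ≤ i ≤ n+1, there exists a unique graded ring homomorphism ψ: R^• → QSym_m with π_{m,n} ∘ ψ = f_n for all n ≤ m. Here g_i^n: ℤ[α_1, …, α_{n+1}] → ℤ[α_1, …, α_n] is the homomorphism sending α_i ↦ 0, α_j ↦ α_j for j < i, and α_j ↦ α_{j−1} for j > i. -/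
/-!
STATEMENT 13: For every `m ≥ 0`, `QSym_m` (quasisymmetric polynomials in `α_1, …, α_m`),
together with the truncation projections `π_{m,n} : QSym_m → ℤ[α_1, …, α_n]` for `n ≤ m`, is
the inverse limit of the polynomial rings `ℤ[α_1, …, α_n]`, `n ≤ m` (with the connecting maps
`g_i^n` deleting one variable), in the category of graded rings.
-/

noncomputable section

/-- A polynomial in `m` ordered variables is quasisymmetric if for every list `l` of positive
integers and every two strictly increasing tuples of variables, the corresponding coefficients
agree. -/
def IsQSymPoly {m : ℕ} (f : MvPolynomial (Fin m) ℤ) : Prop :=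
  ∀ (l : List ℕ+) (i j : Fin l.length → Fin m), StrictMono i → StrictMono j →
    MvPolynomial.coeff (qsMonom l i) f = MvPolynomial.coeff (qsMonom l j) f

/-- `g_i^n : ℤ[α_1, …, α_{n+1}] → ℤ[α_1, …, α_n]`: the homomorphism sending `α_i ↦ 0`,
`α_j ↦ α_j` for `j < i`, and `α_j ↦ α_{j−1}` for `j > i`. -/
def gmap (n : ℕ) (i : Fin (n + 1)) :
    MvPolynomial (Fin (n + 1)) ℤ →+* MvPolynomial (Fin n) ℤ :=
  MvPolynomial.eval₂Hom (MvPolynomial.C : ℤ →+* MvPolynomial (Fin n) ℤ)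
    (fun j : Fin (n + 1) =>
      if _ : (j : ℕ) < (i : ℕ) then MvPolynomial.X ⟨j, by have := i.isLt; omega⟩
      else if _ : (j : ℕ) = (i : ℕ) then 0
      else MvPolynomial.X ⟨(j : ℕ) - 1, by have := j.isLt; omega⟩)

open MvPolynomial Finsupp

/-- Key computation: a "kill some variables" eval₂Hom has coefficients given by mapDomain. -/
lemma coeff_eval₂_kill {N n : ℕ} (v : Fin N → MvPolynomial (Fin n) ℤ)
    (u : Fin n → Fin N) (hu : Function.Injective u)
    (hvu : ∀ k, v (u k) = X k)
    (hv0 : ∀ j, j ∉ Set.range u → v j = 0)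
    (f : MvPolynomial (Fin N) ℤ) (e : Fin n →₀ ℕ) :
    MvPolynomial.coeff e (eval₂Hom (C : ℤ →+* MvPolynomial (Fin n) ℤ) v f) =
      MvPolynomial.coeff (Finsupp.mapDomain u e) f := by
  induction f using MvPolynomial.induction_on' with
  | add p q hp hq => simp only [map_add, coeff_add, hp, hq]
  | monomial d c =>
    rw [coe_eval₂Hom, eval₂_monomial]
    by_cases hd : ∀ j ∈ d.support, j ∈ Set.range u
    · classical
      set d' : Fin n →₀ ℕ := Finsupp.comapDomain u d hu.injOn with hd'
      have hmap : Finsupp.mapDomain u d' = d := by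
        ext j
        by_cases hj : j ∈ Set.range u
        · obtain ⟨k, rfl⟩ := hj
          rw [Finsupp.mapDomain_apply hu]
          simp [hd']
        · rw [Finsupp.mapDomain_notin_range _ _ hj]
          by_contra hne
          exact hj (hd j (Finsupp.mem_support_iff.mpr fun h => hne h.symm))
      have hsupp : d.support = d'.support.image u := by
        rw [← hmap, Finsupp.mapDomain_support_of_injective hu]
      have hprod : (d.prod fun j k => v j ^ k) = monomial d' (1 : ℤ) := by
        rw [Finsupp.prod, hsupp, Finset.prod_image (fun a _ b _ h => hu h)]
        rw [monomial_eq, map_one, one_mul, Finsupp.prod]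
        apply Finset.prod_congr rfl
        intro k hk
        rw [hvu]
        rfl
      rw [hprod]
      have : C c * monomial d' (1:ℤ) = monomial d' c := by
        rw [C_mul_monomial, mul_one]
      rw [this, coeff_monomial, coeff_monomial, ← hmap]
      have hinj := Finsupp.mapDomain_injective (M := ℕ) hu
      by_cases he : d' = e
      · simp [he]
      · rw [if_neg he, if_neg (fun h => he (hinj h))]
    · push_neg at hd
      obtain ⟨j0, hj0s, hj0r⟩ := hd
      have : (d.prod fun j k => v j ^ k) = 0 := by
        apply Finset.prod_eq_zero hj0s
        show v j0 ^ d j0 = 0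
        rw [hv0 j0 hj0r]
        exact zero_pow (Finsupp.mem_support_iff.mp hj0s)
      rw [this, mul_zero, coeff_zero, coeff_monomial]
      rw [if_neg]
      intro h
      subst h
      exact hj0r (Set.mem_of_mem_of_subset (Finset.mem_coe.mpr
        (Finsupp.mapDomain_support hj0s)) (by
          intro x hx
          simp only [Finset.coe_image, Set.mem_image] at hx
          obtain ⟨a, _, rfl⟩ := hx
          exact Set.mem_range_self a))

lemma coeff_gmap {n : ℕ} (i : Fin (n + 1)) (f : MvPolynomial (Fin (n + 1)) ℤ)
    (e : Fin n →₀ ℕ) :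
    MvPolynomial.coeff e (gmap n i f) =
      MvPolynomial.coeff (Finsupp.mapDomain i.succAbove e) f := by
  apply coeff_eval₂_kill _ _ (Fin.succAbove_right_injective)
  · intro k
    rcases lt_or_ge (k.castSucc) i with h | h
    · have hval : ((i.succAbove k : Fin (n+1)) : ℕ) = (k : ℕ) := by
        rw [Fin.succAbove_of_castSucc_lt _ _ h]; rfl
      have hlt : ((i.succAbove k : Fin (n+1)) : ℕ) < (i : ℕ) := by
        rw [hval]; exact h
      simp only [dif_pos hlt]
      congr 1
      ext
      simpa using hval
    · have hval : ((i.succAbove k : Fin (n+1)) : ℕ) = (k : ℕ) + 1 := by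
        rw [Fin.succAbove_of_le_castSucc _ _ h]; rfl
      have hi : (i : ℕ) ≤ (k : ℕ) := h
      have h1 : ¬ ((i.succAbove k : Fin (n+1)) : ℕ) < (i : ℕ) := by omega
      have h2 : ¬ ((i.succAbove k : Fin (n+1)) : ℕ) = (i : ℕ) := by omega
      simp only [dif_neg h1, dif_neg h2]
      congr 1
      ext
      simp [hval]
  · intro j hj
    have : j = i := by
      by_contra hne
      obtain ⟨k, hk⟩ := Fin.exists_succAbove_eq hne
      exact hj ⟨k, hk⟩
    subst this
    simp

/-- Truncation killing variables `≥ n`. -/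
def truncHom {m : ℕ} (n : ℕ) (h : n ≤ m) :
    MvPolynomial (Fin m) ℤ →+* MvPolynomial (Fin n) ℤ :=
  MvPolynomial.eval₂Hom (MvPolynomial.C : ℤ →+* MvPolynomial (Fin n) ℤ)
    (fun j : Fin m => if hj : (j : ℕ) < n then MvPolynomial.X ⟨j, hj⟩ else 0)

lemma coeff_truncHom {m : ℕ} (n : ℕ) (h : n ≤ m) (f : MvPolynomial (Fin m) ℤ)
    (e : Fin n →₀ ℕ) :
    MvPolynomial.coeff e (truncHom n h f) =
      MvPolynomial.coeff (Finsupp.mapDomain (Fin.castLE h) e) f := by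
  apply coeff_eval₂_kill _ _ (Fin.castLE_injective h)
  · intro k
    simp only [Fin.coe_castLE, k.isLt, dif_pos]
  · intro j hj
    rw [dif_neg]
    intro hlt
    exact hj ⟨⟨j, hlt⟩, by ext; rfl⟩

/-- mapDomain of a qsMonom. -/
lemma mapDomain_qsMonom {r N : ℕ} (u : Fin r → Fin N) (l : List ℕ+)
    (i : Fin l.length → Fin r) :
    Finsupp.mapDomain u (qsMonom l i) = qsMonom l (u ∘ i) := by
  unfold qsMonom
  rw [Finsupp.mapDomain_finset_sum]
  apply Finset.sum_congr rfl
  intro k _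
  rw [Finsupp.mapDomain_single]
  rfl

/-- Every exponent vector is a `qsMonom` in a canonical way. -/
lemma exists_qsMonom_rep {r : ℕ} (e : Fin r →₀ ℕ) :
    ∃ (l : List ℕ+) (σ : Fin l.length → Fin r), StrictMono σ ∧
      ∀ {N : ℕ} (u : Fin r → Fin N), Finsupp.mapDomain u e = qsMonom l (u ∘ σ) := by
  classical
  set s := e.support with hs
  set emb := s.orderEmbOfFin rfl with hemb
  set l : List ℕ+ := List.ofFn (fun k : Fin s.card =>
    ⟨e (emb k), Nat.pos_of_ne_zero (Finsupp.mem_support_iff.mp (by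
      rw [hemb]; exact s.orderEmbOfFin_mem rfl k))⟩) with hl
  have hlen : l.length = s.card := List.length_ofFn
  refine ⟨l, fun k => emb (Fin.cast hlen k), ?_, ?_⟩
  · intro a b hab
    exact emb.strictMono (by simpa using hab)
  · intro N u
    have hsum : Finsupp.mapDomain u e = ∑ a ∈ s, Finsupp.single (u a) (e a) := by
      rw [Finsupp.mapDomain]
      rfl
    rw [hsum]
    unfold qsMonom
    have hget : ∀ k : Fin l.length, (l.get k : ℕ) = e (emb (Fin.cast hlen k)) := by
      intro k
      exact congrArg Subtype.val (List.get_ofFn _ k)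
    calc ∑ a ∈ s, Finsupp.single (u a) (e a)
        = ∑ a : ↥s, Finsupp.single (u ↑a) (e ↑a) := (Finset.sum_coe_sort s _).symm
      _ = ∑ k : Fin s.card, Finsupp.single (u (emb k)) (e (emb k)) := by
          rw [← Equiv.sum_comp (s.orderIsoOfFin rfl).toEquiv
            (fun a : ↥s => Finsupp.single (u ↑a) (e ↑a))]
          apply Finset.sum_congr rfl
          intro k _
          rw [show ((s.orderIsoOfFin rfl).toEquiv k : Fin r) = emb k from
            s.coe_orderIsoOfFin_apply rfl k]
      _ = ∑ k : Fin l.length, Finsupp.single ((u ∘ fun k => emb (Fin.cast hlen k)) k)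
            (l.get k : ℕ) := by
          rw [← Equiv.sum_comp (finCongr hlen)]
          apply Finset.sum_congr rfl
          intro k _
          rw [hget]
          rfl

lemma IsQSymPoly.coeff_mapDomain {m : ℕ} {f : MvPolynomial (Fin m) ℤ}
    (hf : IsQSymPoly f) {r : ℕ} (e : Fin r →₀ ℕ) (u v : Fin r → Fin m)
    (hu : StrictMono u) (hv : StrictMono v) :
    MvPolynomial.coeff (Finsupp.mapDomain u e) f =
      MvPolynomial.coeff (Finsupp.mapDomain v e) f := by
  obtain ⟨l, σ, hσ, hrep⟩ := exists_qsMonom_rep e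
  rw [hrep u, hrep v]
  exact hf l (u ∘ σ) (v ∘ σ) (hu.comp hσ) (hv.comp hσ)

/-- The subring of quasisymmetric polynomials, defined recursively. -/
def Qsub : (n : ℕ) → Subring (MvPolynomial (Fin n) ℤ)
  | 0 => ⊤
  | n + 1 => (Qsub n).comap (gmap n 0) ⊓
      ⨅ i : Fin (n + 1), RingHom.eqLocus (gmap n i) (gmap n 0)

lemma mem_Qsub_succ {n : ℕ} (f : MvPolynomial (Fin (n + 1)) ℤ) :
    f ∈ Qsub (n + 1) ↔ gmap n 0 f ∈ Qsub n ∧ ∀ i, gmap n i f = gmap n 0 f := by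
  show f ∈ _ ⊓ _ ↔ _
  rw [Subring.mem_inf, Subring.mem_comap]
  constructor
  · rintro ⟨h1, h2⟩
    refine ⟨h1, fun i => ?_⟩
    have := Subring.mem_iInf.mp h2 i
    exact this
  · rintro ⟨h1, h2⟩
    exact ⟨h1, Subring.mem_iInf.mpr fun i => h2 i⟩

lemma isQSymPoly_of_length_eq {n : ℕ} (f : MvPolynomial (Fin n) ℤ)
    (l : List ℕ+) (i j : Fin l.length → Fin n) (hi : StrictMono i) (hj : StrictMono j)
    (hlen : l.length = n) :
    MvPolynomial.coeff (qsMonom l i) f = MvPolynomial.coeff (qsMonom l j) f := by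
  subst hlen
  have hij : i = j := by
    have hri : Set.range i = Set.univ :=
      Set.range_eq_univ.mpr (Finite.injective_iff_surjective.mp hi.injective)
    have hrj : Set.range j = Set.univ :=
      Set.range_eq_univ.mpr (Finite.injective_iff_surjective.mp hj.injective)
    exact (hi.range_inj hj).mp (hri.trans hrj.symm)
  rw [hij]

lemma factor_succAbove {n ℓ : ℕ} (i : Fin ℓ → Fin (n + 1)) (hi : StrictMono i)
    (t : Fin (n + 1)) (ht : ∀ k, i k ≠ t) :
    ∃ i' : Fin ℓ → Fin n, StrictMono i' ∧ i = t.succAbove ∘ i' := by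
  choose i' hi' using fun k => Fin.exists_succAbove_eq (ht k)
  refine ⟨i', fun a b hab => ?_, funext fun k => (hi' k).symm⟩
  have := hi hab
  rw [← hi' a, ← hi' b] at this
  exact (Fin.strictMono_succAbove t).lt_iff_lt.mp this

lemma mem_Qsub_iff : ∀ (n : ℕ) (f : MvPolynomial (Fin n) ℤ),
    f ∈ Qsub n ↔ IsQSymPoly f := by
  intro n
  induction n with
  | zero =>
    intro f
    simp only [Qsub, Subring.mem_top, true_iff]
    intro l i j _ _
    have : i = j := funext fun k => (i k).elim0
    rw [this]
  | succ n IH =>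
    intro f
    rw [mem_Qsub_succ]
    constructor
    · rintro ⟨h1, h2⟩ l i j hi hj
      have hle : l.length ≤ n + 1 := by
        simpa using Fintype.card_le_of_injective i hi.injective
      rcases eq_or_lt_of_le hle with h | h
      · exact isQSymPoly_of_length_eq f l i j hi hj h
      · have hlt : l.length < n + 1 := h
        have hmiss : ∀ (u : Fin l.length → Fin (n+1)), StrictMono u →
            ∃ t, ∀ k, u k ≠ t := by
          intro u hu
          by_contra hc
          push_neg at hc
          have : Function.Surjective u := fun t => hc t
          have := Fintype.card_le_of_surjective u this
          simp at this
          omega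
        obtain ⟨ti, hti⟩ := hmiss i hi
        obtain ⟨tj, htj⟩ := hmiss j hj
        obtain ⟨i', hi', hieq⟩ := factor_succAbove i hi ti hti
        obtain ⟨j', hj', hjeq⟩ := factor_succAbove j hj tj htj
        have hqs : IsQSymPoly (gmap n 0 f) := (IH _).mp h1
        calc MvPolynomial.coeff (qsMonom l i) f
            = MvPolynomial.coeff (Finsupp.mapDomain ti.succAbove (qsMonom l i')) f := by
              rw [mapDomain_qsMonom, ← hieq]
          _ = MvPolynomial.coeff (qsMonom l i') (gmap n ti f) := (coeff_gmap _ _ _).symm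
          _ = MvPolynomial.coeff (qsMonom l i') (gmap n 0 f) := by rw [h2 ti]
          _ = MvPolynomial.coeff (qsMonom l j') (gmap n 0 f) := hqs l i' j' hi' hj'
          _ = MvPolynomial.coeff (qsMonom l j') (gmap n tj f) := by rw [h2 tj]
          _ = MvPolynomial.coeff (Finsupp.mapDomain tj.succAbove (qsMonom l j')) f :=
              coeff_gmap _ _ _
          _ = MvPolynomial.coeff (qsMonom l j) f := by rw [mapDomain_qsMonom, ← hjeq]
    · intro hf
      constructor
      · rw [IH]
        intro l i j hi hj
        rw [coeff_gmap, coeff_gmap, mapDomain_qsMonom, mapDomain_qsMonom]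
        exact hf l _ _ ((Fin.strictMono_succAbove 0).comp hi)
          ((Fin.strictMono_succAbove 0).comp hj)
      · intro i
        ext e
        rw [coeff_gmap, coeff_gmap]
        exact hf.coeff_mapDomain e _ _ (Fin.strictMono_succAbove i)
          (Fin.strictMono_succAbove 0)

lemma truncHom_self {m : ℕ} (h : m ≤ m) : truncHom m h = RingHom.id _ := by
  apply MvPolynomial.ringHom_ext
  · intro a; simp [truncHom]
  · intro j
    simp only [truncHom, RingHom.id_apply, coe_eval₂Hom, eval₂_X]
    rw [dif_pos j.isLt]

lemma truncHom_gmap_last {m n : ℕ} (h : n + 1 ≤ m) (h' : n ≤ m) :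
    truncHom n h' = (gmap n (Fin.last n)).comp (truncHom (n + 1) h) := by
  apply MvPolynomial.ringHom_ext
  · intro a; simp [truncHom, gmap]
  · intro j
    simp only [truncHom, gmap, RingHom.comp_apply, coe_eval₂Hom, eval₂_X]
    by_cases h1 : (j : ℕ) < n
    · have h2 : (j : ℕ) < n + 1 := by omega
      rw [dif_pos h1, dif_pos h2, eval₂_X]
      have h3 : ((⟨(j : ℕ), h2⟩ : Fin (n+1)) : ℕ) < ((Fin.last n) : ℕ) := by
        simpa using h1
      rw [dif_pos h3]
    · by_cases h2 : (j : ℕ) < n + 1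
      · rw [dif_neg h1, dif_pos h2, eval₂_X]
        have h3 : ¬ ((⟨(j : ℕ), h2⟩ : Fin (n+1)) : ℕ) < ((Fin.last n) : ℕ) := by
          simpa using h1
        have h4 : ((⟨(j : ℕ), h2⟩ : Fin (n+1)) : ℕ) = ((Fin.last n) : ℕ) := by
          simp only [Fin.val_last]
          omega
        rw [dif_neg h3, dif_pos h4]
      · rw [dif_neg h1, dif_neg h2, eval₂_zero]

lemma weight_one_mapDomain {a b : ℕ} (u : Fin a → Fin b) (e : Fin a →₀ ℕ) :
    (Finsupp.weight (1 : Fin b → ℕ)) (Finsupp.mapDomain u e)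
      = Finsupp.weight (1 : Fin a → ℕ) e := by
  rw [show (1 : Fin b → ℕ) = (fun _ => 1) from rfl, show (1 : Fin a → ℕ) = (fun _ => 1) from rfl,
    ← Finsupp.degree_eq_weight_one, ← Finsupp.degree_eq_weight_one]
  show (Finsupp.mapDomain u e).sum (fun _ c => c) = e.sum (fun _ c => c)
  exact Finsupp.sum_mapDomain_index (fun _ => rfl) (fun _ _ _ => rfl)

theorem qsym_m_is_inverse_limit_of_graded_rings (m : ℕ) :
    ∃ (Q : Subring (MvPolynomial (Fin m) ℤ))
      (_ : (Q : Set (MvPolynomial (Fin m) ℤ)) = {f | IsQSymPoly f})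
      (π : (n : ℕ) → n ≤ m → ↥Q →+* MvPolynomial (Fin n) ℤ),
      -- `π_{m,n}` is the truncation keeping only the variables `α_1, …, α_n`
      (∀ (n : ℕ) (h : n ≤ m) (f : Q) (d : Fin n →₀ ℕ),
        MvPolynomial.coeff d (π n h f) =
          MvPolynomial.coeff (Finsupp.mapDomain (Fin.castLE h) d) f.val) ∧
      -- `π_{m,n}` is a graded ring homomorphism
      (∀ (n : ℕ) (h : n ≤ m) (dg : ℕ) (f : Q),
        (f.val.IsHomogeneous dg) → (π n h f).IsHomogeneous dg) ∧
      -- universal property of the inverse limit in the category of graded rings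
      (∀ (R : Type) [CommRing R] (𝒜 : ℕ → AddSubgroup R) [GradedRing 𝒜]
        (fn : (n : ℕ) → n ≤ m → R →+* MvPolynomial (Fin n) ℤ),
        (∀ (n : ℕ) (h : n ≤ m) (dg : ℕ) (x : R), x ∈ 𝒜 dg → (fn n h x).IsHomogeneous dg) →
        (∀ (n : ℕ) (h : n + 1 ≤ m) (i : Fin (n + 1)),
          (gmap n i).comp (fn (n + 1) h) = fn n (Nat.le_of_succ_le h)) →
        ∃! ψ : R →+* ↥Q,
          (∀ (dg : ℕ) (x : R), x ∈ 𝒜 dg → (ψ x).val.IsHomogeneous dg) ∧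
          (∀ (n : ℕ) (h : n ≤ m), (π n h).comp ψ = fn n h)) := by
  refine ⟨Qsub m, Set.ext fun f => mem_Qsub_iff m f, fun n h =>
    (truncHom n h).comp (Qsub m).subtype, ?_, ?_, ?_⟩
  · intro n h f d
    exact coeff_truncHom n h f.val d
  · intro n h dg f hf
    intro d hd
    rw [RingHom.comp_apply, coeff_truncHom] at hd
    have := hf hd
    rwa [weight_one_mapDomain] at this
  · intro R _ 𝒜 _ fn hfn hcompat
    have hmem : ∀ (n : ℕ) (h : n ≤ m) (x : R), fn n h x ∈ Qsub n := by
      intro n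
      induction n with
      | zero => intro h x; exact Subring.mem_top _
      | succ n IH =>
        intro h x
        rw [mem_Qsub_succ]
        have e0 := RingHom.congr_fun (hcompat n h 0) x
        rw [RingHom.comp_apply] at e0
        refine ⟨?_, fun i => ?_⟩
        · rw [e0]; exact IH _ x
        · have ei := RingHom.congr_fun (hcompat n h i) x
          rw [RingHom.comp_apply] at ei
          rw [ei, e0]
    have key : ∀ (d k : ℕ), k + d = m → ∀ (hkm : k ≤ m) (x : R),
        truncHom k hkm (fn m le_rfl x) = fn k hkm x := by
      intro d
      induction d with
      | zero =>
        intro k hk hkm x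
        have : k = m := by omega
        subst this
        rw [truncHom_self]
        rfl
      | succ d IH =>
        intro k hk hkm x
        have hk1 : k + 1 ≤ m := by omega
        rw [truncHom_gmap_last hk1 hkm, RingHom.comp_apply,
          IH (k+1) (by omega) hk1 x]
        exact RingHom.congr_fun (hcompat k hk1 (Fin.last k)) x
    refine ⟨RingHom.codRestrict (fn m le_rfl) (Qsub m) (hmem m le_rfl), ⟨?_, ?_⟩, ?_⟩
    · intro dg x hx
      exact hfn m le_rfl dg x hx
    · intro n h
      refine RingHom.ext fun x => ?_
      exact key (m - n) n (by omega) h x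
    · rintro ψ' ⟨-, hπ'⟩
      refine RingHom.ext fun x => Subtype.ext ?_
      have := RingHom.congr_fun (hπ' m le_rfl) x
      rw [RingHom.comp_apply, RingHom.comp_apply, truncHom_self] at this
      exact this

end
end

section
/- (Graded variant of a lemma of Vezzosi–Vistoli.) Let A, B, C be ℕ-graded commutative rings, let f: B → A and g: B → C be graded ring homomorphisms, and suppose there exists a homomorphism of abelian groups φ: A → B such that (1) the sequence 0 → A →^φ B →^g C → 0 is exact, and (2) the composition f ∘ φ: A → A is multiplication by an element a ∈ A of pure degree which is not a zero-divisor. Then g induces a ring homomorphism q: C ≅ B/im(φ) → A/(a), and the map (f, g): B → A ×_{A/(a)} C into the fiber product of the projection A → A/(a) and q is an isomorphism of graded rings. -/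
/-!
STATEMENT 14 (graded variant of a lemma of Vezzosi–Vistoli): Let `A`, `B`, `C` be ℕ-graded
commutative rings, `f : B → A` and `g : B → C` graded ring homomorphisms, and `φ : A → B` a
homomorphism of abelian groups such that `0 → A → B → C → 0` is exact and `f ∘ φ` is
multiplication by a non-zero-divisor `a ∈ A` of pure degree.  Then `g` induces
`q : C → A/(a)` with `q ∘ g = (A → A/(a)) ∘ f`, and `(f, g) : B → A ×_{A/(a)} C` is an
isomorphism of graded rings onto the fiber product.
-/

/-- A graded ring hom commutes with the decomposition projections. -/
lemma vv_decompose_comm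
    (A B : Type*) [CommRing A] [CommRing B]
    (𝒜 : ℕ → AddSubgroup A) (ℬ : ℕ → AddSubgroup B)
    [GradedRing 𝒜] [GradedRing ℬ]
    (f : B →+* A)
    (hf : ∀ (d : ℕ) (x : B), x ∈ ℬ d → f x ∈ 𝒜 d)
    (b : B) (j : ℕ) :
    f (DirectSum.decompose ℬ b j : B) = (DirectSum.decompose 𝒜 (f b) j : A) := by
  classical
  have hb : f b = ∑ i ∈ (DirectSum.decompose ℬ b).support,
      f (DirectSum.decompose ℬ b i : B) := by
    rw [← map_sum]
    conv_lhs => rw [← DirectSum.sum_support_decompose ℬ b]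
  have h2 : (DirectSum.decompose 𝒜 (f b) j : A)
      = ∑ i ∈ (DirectSum.decompose ℬ b).support,
          (DirectSum.decompose 𝒜 (f (DirectSum.decompose ℬ b i : B)) j : A) := by
    rw [hb, DirectSum.decompose_sum, DFinsupp.finset_sum_apply]
    push_cast
    rfl
  rw [h2]
  have hcongr : ∀ i ∈ (DirectSum.decompose ℬ b).support,
      (DirectSum.decompose 𝒜 (f (DirectSum.decompose ℬ b i : B)) j : A) =
      if i = j then f (DirectSum.decompose ℬ b i : B) else 0 := by
    intro i _
    by_cases h : i = j
    · subst h
      rw [DirectSum.decompose_of_mem_same 𝒜 (hf i _ (SetLike.coe_mem _)), if_pos rfl]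
    · rw [DirectSum.decompose_of_mem_ne 𝒜 (hf i _ (SetLike.coe_mem _)) h, if_neg h]
  rw [Finset.sum_congr rfl hcongr, Finset.sum_ite_eq' _ j]
  split_ifs with h
  · rfl
  · rw [DFinsupp.notMem_support_iff] at h
    rw [h]
    simp

theorem vezzosi_vistoli_graded
    (A B C : Type*) [CommRing A] [CommRing B] [CommRing C]
    (𝒜 : ℕ → AddSubgroup A) (ℬ : ℕ → AddSubgroup B) (𝒞 : ℕ → AddSubgroup C)
    [GradedRing 𝒜] [GradedRing ℬ] [GradedRing 𝒞]
    (f : B →+* A) (g : B →+* C) (φ : A →+ B)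
    -- `f` and `g` are graded ring homomorphisms
    (hf : ∀ (d : ℕ) (x : B), x ∈ ℬ d → f x ∈ 𝒜 d)
    (hg : ∀ (d : ℕ) (x : B), x ∈ ℬ d → g x ∈ 𝒞 d)
    -- exactness of `0 → A → B → C → 0`
    (hφinj : Function.Injective φ)
    (hgsurj : Function.Surjective g)
    (hker : ∀ b : B, g b = 0 ↔ b ∈ Set.range φ)
    -- `f ∘ φ` is multiplication by `a`, of pure degree, not a zero divisor
    (a : A) (hfφ : ∀ x : A, f (φ x) = a * x)
    (hdeg : ∃ d : ℕ, a ∈ 𝒜 d)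
    (hnzd : ∀ x : A, a * x = 0 → x = 0) :
    ∃ q : C →+* A ⧸ Ideal.span {a},
      (∀ b : B, q (g b) = Ideal.Quotient.mk (Ideal.span {a}) (f b)) ∧
      -- `(f, g)` is injective with image exactly the fiber product `A ×_{A/(a)} C`
      Function.Injective (fun b : B => ((f b, g b) : A × C)) ∧
      Set.range (fun b : B => ((f b, g b) : A × C)) =
        {p : A × C | Ideal.Quotient.mk (Ideal.span {a}) p.1 = q p.2} ∧
      -- the inverse is also graded: `(f, g)` identifies the graded pieces
      (∀ (d : ℕ) (b : B), f b ∈ 𝒜 d → g b ∈ 𝒞 d → b ∈ ℬ d) := by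
  classical
  set I : Ideal A := Ideal.span {a} with hI
  have hcond : ∀ b ∈ RingHom.ker g,
      ((Ideal.Quotient.mk I).comp f) b = 0 := by
    intro b hb
    rw [RingHom.mem_ker] at hb
    obtain ⟨x, rfl⟩ := (hker b).mp hb
    simp only [RingHom.comp_apply, hfφ]
    rw [Ideal.Quotient.eq_zero_iff_mem]
    exact Ideal.mul_mem_right _ _ (Ideal.subset_span rfl)
  let q : C →+* A ⧸ I :=
    g.liftOfRightInverse (Function.surjInv hgsurj)
      (Function.rightInverse_surjInv hgsurj)
      ⟨(Ideal.Quotient.mk I).comp f, hcond⟩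
  have hq : ∀ b : B, q (g b) = Ideal.Quotient.mk I (f b) := by
    intro b
    exact g.liftOfRightInverse_comp_apply _ _ ⟨(Ideal.Quotient.mk I).comp f, hcond⟩ b
  have hinj : Function.Injective (fun b : B => ((f b, g b) : A × C)) := by
    intro b b' h
    have h1 : f b = f b' := congrArg Prod.fst h
    have h2 : g b = g b' := congrArg Prod.snd h
    have hgz : g (b - b') = 0 := by rw [map_sub, h2, sub_self]
    obtain ⟨x, hx⟩ := (hker _).mp hgz
    have hax : a * x = 0 := by
      rw [← hfφ, hx, map_sub, h1, sub_self]
    have hx0 : x = 0 := hnzd x hax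
    have hbb : b - b' = 0 := by rw [← hx, hx0, map_zero]
    exact sub_eq_zero.mp hbb
  refine ⟨q, hq, hinj, ?_, ?_⟩
  · ext ⟨x, y⟩
    constructor
    · rintro ⟨b, hb⟩
      have hb1 : f b = x := congrArg Prod.fst hb
      have hb2 : g b = y := congrArg Prod.snd hb
      simp only [Set.mem_setOf_eq]
      rw [← hb1, ← hb2, hq]
    · intro h
      simp only [Set.mem_setOf_eq] at h
      obtain ⟨b, hb⟩ := hgsurj y
      have hmk : Ideal.Quotient.mk I x = Ideal.Quotient.mk I (f b) := by
        rw [h, ← hb, hq]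
      have hmem : x - f b ∈ I := Ideal.Quotient.eq.mp hmk
      rw [hI, Ideal.mem_span_singleton'] at hmem
      obtain ⟨t, ht⟩ := hmem
      refine ⟨b + φ t, ?_⟩
      have hg0 : g (φ t) = 0 := (hker _).mpr ⟨t, rfl⟩
      simp only [map_add, hfφ, hg0, add_zero, hb]
      rw [mul_comm a t, ht, add_sub_cancel]
  · intro d b hfb hgb
    have key : ∀ j : ℕ, j ≠ d → (DirectSum.decompose ℬ b j : B) = 0 := by
      intro j hj
      have h1 : f (DirectSum.decompose ℬ b j : B) = 0 := by
        rw [vv_decompose_comm A B 𝒜 ℬ f hf b j,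
          DirectSum.decompose_of_mem_ne 𝒜 hfb (Ne.symm hj)]
      have h2 : g (DirectSum.decompose ℬ b j : B) = 0 := by
        rw [vv_decompose_comm C B 𝒞 ℬ g hg b j,
          DirectSum.decompose_of_mem_ne 𝒞 hgb (Ne.symm hj)]
      exact hinj (a₁ := (DirectSum.decompose ℬ b j : B)) (a₂ := 0) (by
        simp [h1, h2])
    have hbd : b = (DirectSum.decompose ℬ b d : B) := by
      conv_lhs => rw [← DirectSum.sum_support_decompose ℬ b]
      rw [Finset.sum_eq_single d
        (fun i _ hi => key i hi)
        (fun hd => by rw [DFinsupp.notMem_support_iff.mp hd]; simp)]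
    rw [hbd]
    exact SetLike.coe_mem _
end
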